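/- arXiv:1109.4298 — 3 statements merged into one kernel-verified Lean document; each statement's English description precedes it below -/
import Mathlib

section
/- Euclid I.5, second part: if ABC is an isosceles triangle with dist A B = dist A C, and points D, E lie on rays from A through B and from A through C respectively, strictly beyond B and C (i.e., B strictly between A and D, and C strictly between A and E), then the angles under the base are equal: ∠ D B C = ∠ E C B. -/
open EuclideanGeometry
theorem isosceles_angles_under_base (A B C D E : EuclideanSpace ℝ (Fin 2))
    (h : AffineIndependent ℝ ![A, B, C]) (hiso : dist A B = dist A C)
    (hD : Sbtw ℝ A B D) (hE : Sbtw ℝ A C E) :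
    ∠ D B C = ∠ E C B := by
  have h1 := EuclideanGeometry.angle_add_angle_eq_pi_of_angle_eq_pi C hD.angle₁₂₃_eq_pi
  have h2 := EuclideanGeometry.angle_add_angle_eq_pi_of_angle_eq_pi B hE.angle₁₂₃_eq_pi
  have h3 := EuclideanGeometry.angle_eq_angle_of_dist_eq hiso
  rw [angle_comm C B D, angle_comm B C E, angle_comm C B A, angle_comm B C A] at *
  linarith
end

section
/- The two circles in Euclid I.1 intersect: for distinct points A, B in the plane, the spheres (circles) of radius dist A B centered at A and at B have nonempty intersection, and in fact intersect in exactly two points. -/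
lemma dist_sq_two (x y : EuclideanSpace ℝ (Fin 2)) :
    dist x y ^ 2 = (x 0 - y 0)^2 + (x 1 - y 1)^2 := by
  rw [EuclideanSpace.dist_eq, Real.sq_sqrt (by positivity)]
  simp [Fin.sum_univ_two, Real.dist_eq, sq_abs]

lemma mem_sphere_iff_two (x y : EuclideanSpace ℝ (Fin 2)) (r : ℝ) (hr : 0 ≤ r) :
    x ∈ Metric.sphere y r ↔ (x 0 - y 0)^2 + (x 1 - y 1)^2 = r ^ 2 := by
  rw [Metric.mem_sphere, ← dist_sq_two]
  constructor
  · rintro h; rw [h]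
  · intro h
    calc dist x y = Real.sqrt (dist x y ^ 2) := (Real.sqrt_sq dist_nonneg).symm
    _ = Real.sqrt (r ^ 2) := by rw [h]
    _ = r := Real.sqrt_sq hr

theorem circles_intersect_in_two_points (A B : EuclideanSpace ℝ (Fin 2)) (hAB : A ≠ B) :
    (Metric.sphere A (dist A B) ∩ Metric.sphere B (dist A B)).Nonempty ∧
    (Metric.sphere A (dist A B) ∩ Metric.sphere B (dist A B)).ncard = 2 := by
  set r := dist A B with hr_def
  have hr : 0 < r := dist_pos.mpr hAB
  set a := B 0 - A 0 with ha_def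
  set b := B 1 - A 1 with hb_def
  have hR : a ^ 2 + b ^ 2 = r ^ 2 := by
    rw [hr_def, dist_sq_two]; rw [ha_def, hb_def]; ring
  set s := Real.sqrt 3 with hs_def
  have hs2 : s ^ 2 = 3 := Real.sq_sqrt (by norm_num)
  have hs0 : 0 < s := Real.sqrt_pos.mpr (by norm_num)
  set P : EuclideanSpace ℝ (Fin 2) :=
    (WithLp.toLp 2 ![A 0 + a/2 - s*b/2, A 1 + b/2 + s*a/2]) with hP_def
  set Q : EuclideanSpace ℝ (Fin 2) :=
    (WithLp.toLp 2 ![A 0 + a/2 + s*b/2, A 1 + b/2 - s*a/2]) with hQ_def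
  have hP0 : P 0 = A 0 + a/2 - s*b/2 := rfl
  have hP1 : P 1 = A 1 + b/2 + s*a/2 := rfl
  have hQ0 : Q 0 = A 0 + a/2 + s*b/2 := rfl
  have hQ1 : Q 1 = A 1 + b/2 - s*a/2 := rfl
  have hRpos : (0:ℝ) < a^2 + b^2 := by rw [hR]; positivity
  have hset : Metric.sphere A r ∩ Metric.sphere B r = {P, Q} := by
    ext X
    rw [Set.mem_inter_iff, mem_sphere_iff_two X A r hr.le, mem_sphere_iff_two X B r hr.le]
    constructor
    · rintro ⟨h1, h2⟩
      set u := X 0 - A 0 with hu_def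
      set v := X 1 - A 1 with hv_def
      have hXB0 : X 0 - B 0 = u - a := by rw [hu_def, ha_def]; ring
      have hXB1 : X 1 - B 1 = v - b := by rw [hv_def, hb_def]; ring
      rw [hXB0, hXB1] at h2
      have hlin : a * u + b * v = (a^2 + b^2) / 2 := by linear_combination (h1 - h2) / 2
      have hkey : (b*u - a*v - s*(a^2+b^2)/2) * (b*u - a*v + s*(a^2+b^2)/2) = 0 := by
        linear_combination (a^2+b^2)*h1 - (a*u+b*v+(a^2+b^2)/2)*hlin -
          ((a^2+b^2)^2/4)*hs2 - (a^2+b^2)*hR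
      rcases mul_eq_zero.mp hkey with hc | hc
      · -- b*u - a*v = s*R/2 : X = Q
        right
        have hu : u = a/2 + s*b/2 := by
          have h := mul_left_cancel₀ (ne_of_gt hRpos)
            (show (a^2+b^2) * u = (a^2+b^2) * (a/2 + s*b/2) by
              linear_combination a*hlin + b*hc)
          exact h
        have hv : v = b/2 - s*a/2 := by
          exact mul_left_cancel₀ (ne_of_gt hRpos)
            (show (a^2+b^2) * v = (a^2+b^2) * (b/2 - s*a/2) by
              linear_combination b*hlin - a*hc)
        have hX0 : X 0 = Q 0 := by rw [hQ0]; linear_combination hu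
        have hX1 : X 1 = Q 1 := by rw [hQ1]; linear_combination hv
        show X = Q
        ext i
        fin_cases i
        · exact hX0
        · exact hX1
      · left
        have hu : u = a/2 - s*b/2 := by
          exact mul_left_cancel₀ (ne_of_gt hRpos)
            (show (a^2+b^2) * u = (a^2+b^2) * (a/2 - s*b/2) by
              linear_combination a*hlin + b*hc)
        have hv : v = b/2 + s*a/2 := by
          exact mul_left_cancel₀ (ne_of_gt hRpos)
            (show (a^2+b^2) * v = (a^2+b^2) * (b/2 + s*a/2) by
              linear_combination b*hlin - a*hc)
        have hX0 : X 0 = P 0 := by rw [hP0]; linear_combination hu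
        have hX1 : X 1 = P 1 := by rw [hP1]; linear_combination hv
        show X = P
        ext i
        fin_cases i
        · exact hX0
        · exact hX1
    · rintro (rfl | rfl)
      · refine ⟨?_, ?_⟩
        · rw [hP0, hP1]
          linear_combination hR + ((a^2+b^2)/4)*hs2
        · rw [hP0, hP1]
          rw [show A 0 + a/2 - s*b/2 - B 0 = -(a/2) - s*b/2 by rw [ha_def]; ring,
              show A 1 + b/2 + s*a/2 - B 1 = -(b/2) + s*a/2 by rw [hb_def]; ring]
          linear_combination hR + ((a^2+b^2)/4)*hs2
      · refine ⟨?_, ?_⟩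
        · rw [hQ0, hQ1]
          linear_combination hR + ((a^2+b^2)/4)*hs2
        · rw [hQ0, hQ1]
          rw [show A 0 + a/2 + s*b/2 - B 0 = -(a/2) + s*b/2 by rw [ha_def]; ring,
              show A 1 + b/2 - s*a/2 - B 1 = -(b/2) - s*a/2 by rw [hb_def]; ring]
          linear_combination hR + ((a^2+b^2)/4)*hs2
  have hPQ : P ≠ Q := by
    intro h
    have h0 : P 0 = Q 0 := by rw [h]
    have h1 : P 1 = Q 1 := by rw [h]
    rw [hP0, hQ0] at h0
    rw [hP1, hQ1] at h1
    have hb0 : b = 0 := by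
      have : s * b = 0 := by linear_combination -h0
      rcases mul_eq_zero.mp this with h' | h'
      · exact absurd h' (ne_of_gt hs0)
      · exact h'
    have ha0 : a = 0 := by
      have : s * a = 0 := by linear_combination h1
      rcases mul_eq_zero.mp this with h' | h'
      · exact absurd h' (ne_of_gt hs0)
      · exact h'
    rw [ha0, hb0] at hRpos
    norm_num at hRpos
  rw [hset]
  exact ⟨⟨P, Set.mem_insert _ _⟩, Set.ncard_pair hPQ⟩
end

section
/- In Euclid I.5 with the notation of its proof: if A, B, C are affinely independent with dist A B = dist A C, F is a point with B strictly between A and F, and G is on segment from A beyond C with C strictly between A and G and dist A F = dist A G, then dist F C = dist G B. -/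
open EuclideanGeometry

lemma angle_eq_of_sbtw {A B F C : EuclideanSpace ℝ (Fin 2)} (hF : Sbtw ℝ A B F) :
    ∠ F A C = ∠ B A C := by
  obtain ⟨t, ⟨ht0, ht1⟩, hB⟩ := hF.wbtw
  have ht : 0 < t := by
    rcases ht0.lt_or_eq with h | h
    · exact h
    · exact absurd hB.symm (by exfalso; exact hF.ne_left (by subst h; simpa using hB.symm))
  have hBA : B -ᵥ A = t • (F -ᵥ A) := by
    rw [← hB]; simp [AffineMap.lineMap_apply, vsub_vadd_eq_vsub_sub]
  rw [EuclideanGeometry.angle, EuclideanGeometry.angle, hBA,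
    InnerProductGeometry.angle_smul_left_of_pos _ _ ht]

theorem euclid_I5_first_sas (A B C F G : EuclideanSpace ℝ (Fin 2))
    (h : AffineIndependent ℝ ![A, B, C]) (hiso : dist A B = dist A C)
    (hF : Sbtw ℝ A B F) (hG : Sbtw ℝ A C G) (hFG : dist A F = dist A G) :
    dist F C = dist G B := by
  have hang : ∠ F A C = ∠ G A B := by
    rw [angle_eq_of_sbtw hF, angle_comm, angle_eq_of_sbtw hG, angle_comm]
  have h1 := EuclideanGeometry.law_cos F A C
  have h2 := EuclideanGeometry.law_cos G A B
  rw [dist_comm F A, dist_comm C A] at h1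
  rw [dist_comm G A, dist_comm B A] at h2
  have : dist F C ^ 2 = dist G B ^ 2 := by
    simp only [pow_two]
    rw [h1, h2, hang, hFG, hiso]
  nlinarith [dist_nonneg (x := F) (y := C), dist_nonneg (x := G) (y := B)]
end
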